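/- Hallucination from computational hardness: let M be a finite message set with |M| ≥ 3 and e: M → H an injective encryption map. For any β ∈ [0,1] and any base model p̂, if the induced thresholded classifier f̂ does not β-break the encryption scheme, i.e. Pr_{x∼D}[f̂(x) ≠ f(x)] > (1−β)/2, then p̂ outputs erroneous decryptions with probability at least 1 − β − 2/(|M|−1) − δ. -/

import Mathlib

open Finset

open scoped Classical

/-- (Observation 2 of the paper: hallucination from computational
hardness.)  Prompts are ciphertexts `e m` (with `μ` uniform over `e(M)`); for prompt
`e m` the valid responses are `{m, IDK}` and the errors are `M \ {m}`.  If the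
thresholded classifier `f̂` induced by the base model `phat` does not `β`-break the
encryption scheme, i.e. `erriv > (1−β)/2`, then the base model outputs erroneous
decryptions with probability at least `1 − β − 2/(|M|−1) − δ`. -/
theorem stmt16 {M H : Type} [Fintype M] [DecidableEq M]
    (hM : 3 ≤ Fintype.card M)
    (e : M → H) (he : Function.Injective e)
    (β : ℝ) (hβ : β ∈ Set.Icc (0 : ℝ) 1)
    -- base model: conditional distributions over responses M ∪ {IDK} given a ciphertext
    (phat : H → Option M → ℝ)
    (hphat0 : ∀ h r, 0 ≤ phat h r)
    (hphat1 : ∀ h, ∑ r : Option M, phat h r = 1) :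
    let Mc : ℝ := (Fintype.card M : ℝ)
    -- the classifier threshold 1/|E_c| = 1/(|M|−1)
    let thr : ℝ := 1 / (Mc - 1)
    -- D: with prob 1/2, (e m, m) for uniform m; with prob 1/2, c = e m for uniform m
    -- and r uniform in E_c = M \ {m}; IDK never drawn under D
    let D : M → Option M → ℝ := fun m r =>
      r.elim 0 (fun x => if x = m then 1 / (2 * Mc) else 1 / (2 * Mc * (Mc - 1)))
    -- f labels (e m, r) + iff r is valid for the prompt, i.e. r ∈ {some m, IDK}
    let valid : M → Option M → Prop := fun m r => r = none ∨ r = some m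
    -- f̂ labels (c, r) + iff phat(r|c) > 1/(|M|−1)
    let above : M → Option M → Prop := fun m r => phat (e m) r > thr
    let erriv : ℝ := ∑ m, ∑ r : Option M,
      if (valid m r ∧ ¬ above m r) ∨ (¬ valid m r ∧ above m r) then D m r else 0
    -- probability of an erroneous decryption
    let err : ℝ := ∑ m, (1 / Mc) * ∑ x ∈ Finset.univ \ {m}, phat (e m) (some x)
    -- calibration gap δ = |phat(A) − p(A)|, where p draws m uniformly and outputs (e m, m)
    let δ : ℝ := |∑ m, ∑ r : Option M,
      if above m r
      then (1 / Mc) * (phat (e m) r - (if r = some m then 1 else 0)) else 0|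
    -- f̂ does not β-break the scheme
    erriv > (1 - β) / 2 →
    err ≥ 1 - β - 2 / (Mc - 1) - δ := by
  intro Mc thr D valid above erriv err δ hb
  have hMcdef : Mc = (Fintype.card M : ℝ) := rfl
  have hMc3 : (3:ℝ) ≤ Mc := by rw [hMcdef]; exact_mod_cast hM
  have hMc0 : (0:ℝ) < Mc := by linarith
  have hMc1 : (0:ℝ) < Mc - 1 := by linarith
  have hthr_def : thr = 1 / (Mc - 1) := rfl
  have hthr : (0:ℝ) < thr := by rw [hthr_def]; positivity
  have hc : (0:ℝ) ≤ 1 / Mc := by positivity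
  -- per-message inequality
  have perm : ∀ m : M,
      2 * (∑ r : Option M,
        if (valid m r ∧ ¬ above m r) ∨ (¬ valid m r ∧ above m r) then D m r else 0)
      ≤ (1 / Mc) * (∑ x ∈ Finset.univ \ {m}, phat (e m) (some x)) + 2 * thr / Mc
        + ∑ r : Option M,
          (if above m r then (1 / Mc) * (phat (e m) r - (if r = some m then 1 else 0)) else 0) := by
    intro m
    have hvn : valid m none := Or.inl rfl
    have hvm : valid m (some m) := Or.inr rfl
    have herrm0 : 0 ≤ ∑ x ∈ Finset.univ \ {m}, phat (e m) (some x) :=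
      Finset.sum_nonneg (fun x _ => hphat0 _ _)
    have hsum1 : phat (e m) none + ((∑ x ∈ Finset.univ \ {m}, phat (e m) (some x)) + phat (e m) (some m)) = 1 := by
      have h1 := hphat1 (e m)
      rw [Fintype.sum_option] at h1
      rw [Finset.sum_eq_sum_sdiff_singleton_add (mem_univ m) (fun x => phat (e m) (some x))] at h1
      linarith
    rw [Fintype.sum_option, Fintype.sum_option,
      Finset.sum_eq_sum_sdiff_singleton_add (mem_univ m)
        (fun x => if (valid m (some x) ∧ ¬ above m (some x)) ∨ (¬ valid m (some x) ∧ above m (some x)) then D m (some x) else 0),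
      Finset.sum_eq_sum_sdiff_singleton_add (mem_univ m)
        (fun x => if above m (some x) then (1 / Mc) * (phat (e m) (some x) - (if some x = some m then 1 else 0)) else 0)]
    have hDn : D m none = 0 := rfl
    have hDm : D m (some m) = 1 / (2 * Mc) := by
      show (if m = m then 1 / (2 * Mc) else 1 / (2 * Mc * (Mc - 1))) = 1 / (2 * Mc)
      simp
    -- termwise bound on the erroneous responses
    have hdiff : ∑ x ∈ Finset.univ \ {m},
        2 * (if (valid m (some x) ∧ ¬ above m (some x)) ∨ (¬ valid m (some x) ∧ above m (some x)) then D m (some x) else 0)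
        ≤ ∑ x ∈ Finset.univ \ {m},
          (if above m (some x) then (1 / Mc) * (phat (e m) (some x) - (if some x = some m then 1 else 0)) else 0) := by
      apply Finset.sum_le_sum
      intro x hx
      have hxm : x ≠ m := by
        simp only [Finset.mem_sdiff, Finset.mem_singleton] at hx
        exact hx.2
      have hnv : ¬ valid m (some x) := by
        rintro (h | h)
        · cases h
        · injection h with h'
          exact hxm h'
      have hD : D m (some x) = 1 / (2 * Mc * (Mc - 1)) := by
        show (if x = m then 1 / (2 * Mc) else 1 / (2 * Mc * (Mc - 1))) = _
        simp [hxm]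
      have hind : (if (some x : Option M) = some m then (1:ℝ) else 0) = 0 := by
        simp [hxm]
      by_cases hab : above m (some x)
      · rw [if_pos (Or.inr ⟨hnv, hab⟩), if_pos hab, hD, hind, sub_zero]
        have hgt : 1 / (Mc - 1) < phat (e m) (some x) := hab
        have h1 : (1 / Mc) * (1 / (Mc - 1)) ≤ (1 / Mc) * phat (e m) (some x) :=
          mul_le_mul_of_nonneg_left hgt.le hc
        have h2 : 2 * (1 / (2 * Mc * (Mc - 1))) = (1 / Mc) * (1 / (Mc - 1)) := by
          field_simp
        linarith
      · rw [if_neg (by rintro (⟨h, _⟩ | ⟨_, h⟩); exact hnv h; exact hab h), if_neg hab]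
        norm_num
    -- the scalar part (responses `none` and `some m`)
    have hscal : 2 * ((if (valid m none ∧ ¬ above m none) ∨ (¬ valid m none ∧ above m none) then D m none else 0)
        + (if (valid m (some m) ∧ ¬ above m (some m)) ∨ (¬ valid m (some m) ∧ above m (some m)) then D m (some m) else 0))
        ≤ (1 / Mc) * (∑ x ∈ Finset.univ \ {m}, phat (e m) (some x)) + 2 * thr / Mc
          + ((if above m none then (1 / Mc) * (phat (e m) none - (if (none : Option M) = some m then 1 else 0)) else 0)
            + (if above m (some m) then (1 / Mc) * (phat (e m) (some m) - (if (some m : Option M) = some m then 1 else 0)) else 0)) := by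
      rw [hDn, hDm]
      have hindn : (if (none : Option M) = some m then (1:ℝ) else 0) = 0 := by simp
      have hindm : (if (some m : Option M) = some m then (1:ℝ) else 0) = 1 := by simp
      rw [hindn, hindm, sub_zero]
      set a := phat (e m) (some m)
      set i := phat (e m) none
      set errm := ∑ x ∈ Finset.univ \ {m}, phat (e m) (some x)
      have hcondn : ¬ ((valid m none ∧ ¬ above m none) ∨ (¬ valid m none ∧ above m none)) ↔ above m none := by
        constructor
        · intro h
          by_contra hno
          exact h (Or.inl ⟨hvn, hno⟩)
        · rintro h (⟨_, h2⟩ | ⟨h2, _⟩)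
          · exact h2 h
          · exact h2 hvn
      by_cases ha : above m (some m) <;> by_cases hi : above m none
      · rw [if_neg (hcondn.mpr hi), if_neg (by rintro (⟨_, h⟩ | ⟨h, _⟩); exact h ha; exact h hvm),
          if_pos hi, if_pos ha]
        have hX : (0:ℝ) ≤ errm + 2 * thr + i + (a - 1) := by linarith
        have hE : (1 / Mc) * errm + 2 * thr / Mc + ((1 / Mc) * i + (1 / Mc) * (a - 1))
            = (1 / Mc) * (errm + 2 * thr + i + (a - 1)) := by ring
        have := mul_nonneg hc hX
        linarith
      · rw [if_pos (Or.inl ⟨hvn, hi⟩), if_neg (by rintro (⟨_, h⟩ | ⟨h, _⟩); exact h ha; exact h hvm),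
          if_neg hi, if_pos ha]
        have hile : i ≤ thr := by
          have : ¬ i > thr := hi
          simp only [not_lt] at this
          linarith [this]
        have hX : (0:ℝ) ≤ errm + 2 * thr + (a - 1) := by linarith
        have hE : (1 / Mc) * errm + 2 * thr / Mc + (0 + (1 / Mc) * (a - 1))
            = (1 / Mc) * (errm + 2 * thr + (a - 1)) := by ring
        have := mul_nonneg hc hX
        have hDn0 : (2:ℝ) * (0 + 0) = 0 := by ring
        linarith
      · rw [if_neg (hcondn.mpr hi), if_pos (Or.inl ⟨hvm, ha⟩), if_pos hi, if_neg ha]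
        have hale : a ≤ thr := by
          have : ¬ a > thr := ha
          simp only [not_lt] at this
          linarith [this]
        have hX : (1:ℝ) ≤ errm + 2 * thr + i := by linarith
        have hE : (1 / Mc) * errm + 2 * thr / Mc + ((1 / Mc) * i + 0) - 2 * (0 + 1 / (2 * Mc))
            = (1 / Mc) * (errm + 2 * thr + i - 1) := by ring
        have := mul_nonneg hc (by linarith : (0:ℝ) ≤ errm + 2 * thr + i - 1)
        linarith
      · rw [if_pos (Or.inl ⟨hvn, hi⟩), if_pos (Or.inl ⟨hvm, ha⟩), if_neg hi, if_neg ha]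
        have hale : a ≤ thr := by
          have : ¬ a > thr := ha
          simp only [not_lt] at this
          linarith [this]
        have hile : i ≤ thr := by
          have : ¬ i > thr := hi
          simp only [not_lt] at this
          linarith [this]
        have hE : (1 / Mc) * errm + 2 * thr / Mc + (0 + 0) - 2 * (0 + 1 / (2 * Mc))
            = (1 / Mc) * (errm + 2 * thr - 1) := by ring
        have := mul_nonneg hc (by linarith : (0:ℝ) ≤ errm + 2 * thr - 1)
        linarith
    have hmulsum : 2 * ∑ x ∈ Finset.univ \ {m},
        (if (valid m (some x) ∧ ¬ above m (some x)) ∨ (¬ valid m (some x) ∧ above m (some x)) then D m (some x) else 0)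
        = ∑ x ∈ Finset.univ \ {m},
          2 * (if (valid m (some x) ∧ ¬ above m (some x)) ∨ (¬ valid m (some x) ∧ above m (some x)) then D m (some x) else 0) := by
      rw [Finset.mul_sum]
    linarith [hdiff, hscal, hmulsum]
  -- sum the per-message inequalities
  have h2thr : ∑ _m : M, 2 * thr / Mc = 2 * thr := by
    rw [Finset.sum_const, Finset.card_univ, nsmul_eq_mul, ← hMcdef]
    field_simp
  have key : 2 * erriv ≤ err + 2 * thr + ∑ m, ∑ r : Option M,
      (if above m r then (1 / Mc) * (phat (e m) r - (if r = some m then 1 else 0)) else 0) := by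
    show 2 * (∑ m, ∑ r : Option M,
        if (valid m r ∧ ¬ above m r) ∨ (¬ valid m r ∧ above m r) then D m r else 0)
      ≤ (∑ m, (1 / Mc) * ∑ x ∈ Finset.univ \ {m}, phat (e m) (some x)) + 2 * thr + _
    rw [Finset.mul_sum, ← h2thr, ← Finset.sum_add_distrib, ← Finset.sum_add_distrib]
    exact Finset.sum_le_sum (fun m _ => perm m)
  have hδ : (∑ m, ∑ r : Option M,
      (if above m r then (1 / Mc) * (phat (e m) r - (if r = some m then 1 else 0)) else 0)) ≤ δ :=
    le_abs_self _
  have h2div : 2 / (Mc - 1) = 2 * thr := by rw [hthr_def]; ring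
  linarith
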